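/- Let T be a tree with nonsingular s×s matrix edge weights, and let e be an edge between vertices u and v with weight W(e). For any real α with 0 < α < 1, the matrix M_u(v) − α (J ⊗ W(e)⁻¹) is invertible, and its inverse equals M_u(v)⁻¹ + e_v e_vᵀ ⊗ ((α/(1−α)) W(e)), where e_v is the standard basis column vector (of conformal order) with 1 in the position of vertex v. -/

import Mathlib

open scoped Classical
open Matrix

/-- The unique path in a tree between two vertices. -/
noncomputable def pathWalk {V : Type*} {G : SimpleGraph V} (hT : G.IsTree) (u v : V) :
    G.Walk u v := (hT.existsUnique_path u v).choose

/-- The list of edges of the unique path between two vertices of a tree. -/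
noncomputable def pathEdges {V : Type*} {G : SimpleGraph V} (hT : G.IsTree) (u v : V) :
    List (Sym2 V) := (pathWalk hT u v).edges

/-- The branch `B_x(y)`: the set of vertices of the component of `T - x` containing `y`. -/
def branch {V : Type*} {G : SimpleGraph V} (hT : G.IsTree) (x y : V) : Set V :=
  {a | a ≠ x ∧ x ∉ (pathWalk hT a y).support}

/-- The bottleneck matrix `M_x(y)` of the branch `B_x(y)` based at `x`. -/
noncomputable def bottleneck {V : Type*} {G : SimpleGraph V} (hT : G.IsTree) (d : ℕ)
    (W : Sym2 V → Matrix (Fin d) (Fin d) ℝ) (x y : V) :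
    Matrix (↥(branch hT x y) × Fin d) (↥(branch hT x y) × Fin d) ℝ :=
  Matrix.of fun p q =>
    (∑ e ∈ (pathEdges hT (p.1 : V) x).toFinset ∩ (pathEdges hT (q.1 : V) x).toFinset,
      (W e)⁻¹) p.2 q.2

section
variable {V : Type*} {G : SimpleGraph V} (hT : G.IsTree)

lemma pathWalk_isPath (a b : V) : (pathWalk hT a b).IsPath :=
  (hT.existsUnique_path a b).choose_spec.1

lemma pathWalk_unique {a b : V} (p : G.Walk a b) (hp : p.IsPath) : p = pathWalk hT a b :=
  ((hT.existsUnique_path a b).choose_spec.2 p hp).trans rfl |>.symm ▸ rfl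

end

section
variable {V : Type*} {G : SimpleGraph V} (hT : G.IsTree)

lemma pathWalk_self (a : V) : pathWalk hT a a = SimpleGraph.Walk.nil :=
  (pathWalk_unique hT _ SimpleGraph.Walk.IsPath.nil).symm

lemma pathWalk_dropUntil {a b z : V} (hz : z ∈ (pathWalk hT a b).support) :
    pathWalk hT z b = (pathWalk hT a b).dropUntil z hz :=
  (pathWalk_unique hT _ ((pathWalk_isPath hT a b).dropUntil hz)).symm

lemma pathWalk_concat {u v y : V} (hadj : G.Adj u v) (h : u ∉ (pathWalk hT y v).support) :
    pathWalk hT y u = (pathWalk hT y v).concat hadj.symm := by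
  refine (pathWalk_unique hT _ ?_).symm
  rw [SimpleGraph.Walk.isPath_def, SimpleGraph.Walk.support_concat]
  rw [List.nodup_append]
  refine ⟨(pathWalk_isPath hT y v).support_nodup, List.nodup_singleton _, ?_⟩
  exact fun a ha b hb hab => h (by rw [List.mem_singleton] at hb; rw [← hb, ← hab]; exact ha)

/-- parent of a vertex towards `u` -/
noncomputable def par (b z : V) : V := (pathWalk hT z b).getVert 1

lemma pathWalk_cons {b z : V} (hz : z ≠ b) :
    ∃ h : G.Adj z (par hT b z), pathWalk hT z b = SimpleGraph.Walk.cons h (pathWalk hT (par hT b z) b) := by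
  have hp := pathWalk_isPath hT z b
  cases hpw : pathWalk hT z b with
  | nil => exact absurd rfl hz
  | @cons _ w _ h q =>
    rw [hpw] at hp
    have hq : q.IsPath := hp.of_cons
    have hw : par hT b z = w := by
      rw [par, hpw, SimpleGraph.Walk.getVert_cons_succ (n := 0),
        SimpleGraph.Walk.getVert_zero]
    rw [hw]
    refine ⟨h, ?_⟩
    rw [← pathWalk_unique hT q hq]

lemma par_adj {b z : V} (hz : z ≠ b) : G.Adj z (par hT b z) :=
  (pathWalk_cons hT hz).choose

lemma len_par {b z : V} (hz : z ≠ b) :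
    (pathWalk hT z b).length = (pathWalk hT (par hT b z) b).length + 1 := by
  obtain ⟨h, hp⟩ := pathWalk_cons hT hz
  rw [hp, SimpleGraph.Walk.length_cons]

lemma firstEdge_inj {b z z' : V} (hz : z ≠ b) (hz' : z' ≠ b)
    (h : s(z, par hT b z) = s(z', par hT b z')) : z = z' := by
  rw [Sym2.eq_iff] at h
  rcases h with ⟨rfl, -⟩ | ⟨h1, h2⟩
  · rfl
  · exfalso
    have l1 := len_par hT hz
    have l2 := len_par hT hz'
    rw [← h1, ← h2] at *
    omega

lemma edges_eq (b : V) : ∀ (n : ℕ) (z : V), (pathWalk hT z b).length = n →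
    (pathWalk hT z b).edges =
      ((pathWalk hT z b).support.filter (fun x => x ≠ b)).map (fun x => s(x, par hT b x)) := by
  intro n
  induction n with
  | zero =>
    intro z hlen
    have hz : z = b := SimpleGraph.Walk.eq_of_length_eq_zero hlen
    subst hz
    rw [pathWalk_self]
    simp
  | succ n ih =>
    intro z hlen
    have hz : z ≠ b := by
      rintro rfl
      rw [pathWalk_self] at hlen
      simp at hlen
    obtain ⟨h, hp⟩ := pathWalk_cons hT hz
    have hlen' : (pathWalk hT (par hT b z) b).length = n := by
      have := len_par hT hz
      omega
    rw [hp, SimpleGraph.Walk.edges_cons, SimpleGraph.Walk.support_cons]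
    simp [List.filter_cons, hz, ih _ hlen']

lemma mem_edges_iff {b z : V} {f : Sym2 V} :
    f ∈ (pathWalk hT z b).edges ↔
      ∃ x, x ∈ (pathWalk hT z b).support ∧ x ≠ b ∧ f = s(x, par hT b x) := by
  rw [edges_eq hT b _ z rfl]
  simp only [List.mem_map, List.mem_filter]
  constructor
  · rintro ⟨x, ⟨hx1, hx2⟩, rfl⟩
    exact ⟨x, hx1, by simpa using hx2, rfl⟩
  · rintro ⟨x, hx1, hx2, rfl⟩
    exact ⟨x, ⟨hx1, by simpa using hx2⟩, rfl⟩

lemma v_mem_branch {u v : V} (hadj : G.Adj u v) : v ∈ branch hT u v := by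
  refine ⟨hadj.ne', ?_⟩
  rw [pathWalk_self]
  simp [hadj.ne]

lemma branch_support {u v : V} (hadj : G.Adj u v) {y z : V} (hy : y ∈ branch hT u v)
    (hz : z ∈ (pathWalk hT y u).support) (hzu : z ≠ u) : z ∈ branch hT u v := by
  have hcat : pathWalk hT y u = (pathWalk hT y v).concat hadj.symm :=
    pathWalk_concat hT hadj hy.2
  rw [hcat, SimpleGraph.Walk.support_concat, List.mem_append] at hz
  have hz' : z ∈ (pathWalk hT y v).support := by
    rcases hz with h | h
    · exact h
    · simp at h; exact absurd h hzu
  refine ⟨hzu, ?_⟩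
  rw [pathWalk_dropUntil hT hz']
  intro hu
  exact hy.2 (SimpleGraph.Walk.support_dropUntil_subset _ _ hu)

lemma pathWalk_vu {u v : V} (hadj : G.Adj u v) : pathWalk hT v u = SimpleGraph.Walk.cons hadj.symm SimpleGraph.Walk.nil := by
  refine (pathWalk_unique hT _ ?_).symm
  rw [SimpleGraph.Walk.cons_isPath_iff]
  exact ⟨SimpleGraph.Walk.IsPath.nil, by simp [hadj.ne']⟩

lemma edges_vu {u v : V} (hadj : G.Adj u v) : (pathWalk hT v u).edges = [s(u,v)] := by
  rw [pathWalk_vu hT hadj, SimpleGraph.Walk.edges_cons, SimpleGraph.Walk.edges_nil,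
    Sym2.eq_swap]

lemma uv_mem_edges {u v : V} (hadj : G.Adj u v) {y : V} (hy : y ∈ branch hT u v) :
    s(u,v) ∈ (pathWalk hT y u).edges := by
  rw [pathWalk_concat hT hadj hy.2, SimpleGraph.Walk.edges_concat]
  simp [Sym2.eq_swap]

lemma len_le_of_mem_support {b y z : V} (hz : z ∈ (pathWalk hT y b).support) :
    (pathWalk hT z b).length ≤ (pathWalk hT y b).length := by
  rw [pathWalk_dropUntil hT hz]
  exact SimpleGraph.Walk.length_dropUntil_le _ hz

lemma eq_of_mem_support_len_eq {b y z : V} (hz : z ∈ (pathWalk hT y b).support)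
    (hlen : (pathWalk hT z b).length = (pathWalk hT y b).length) : z = y := by
  have hspec := SimpleGraph.Walk.take_spec (pathWalk hT y b) hz
  have hlen2 : ((pathWalk hT y b).takeUntil z hz).length +
      ((pathWalk hT y b).dropUntil z hz).length = (pathWalk hT y b).length := by
    rw [← SimpleGraph.Walk.length_append, hspec]
  rw [← pathWalk_dropUntil hT hz, hlen] at hlen2
  have : ((pathWalk hT y b).takeUntil z hz).length = 0 := by omega
  exact (SimpleGraph.Walk.eq_of_length_eq_zero this).symm


lemma bott_apply {V : Type*} {G : SimpleGraph V} (hT : G.IsTree) (d : ℕ)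
    (W : Sym2 V → Matrix (Fin d) (Fin d) ℝ) (x y : V)
    (p q : ↥(branch hT x y) × Fin d) :
    bottleneck hT d W x y p q =
      ∑ e ∈ (pathEdges hT (p.1 : V) x).toFinset ∩ (pathEdges hT (q.1 : V) x).toFinset,
        (W e)⁻¹ p.2 q.2 := by
  rw [bottleneck, Matrix.of_apply, Matrix.sum_apply]

lemma bottleneck_col {V : Type*} {G : SimpleGraph V} (hT : G.IsTree) (d : ℕ)
    (W : Sym2 V → Matrix (Fin d) (Fin d) ℝ) {u v : V} (hadj : G.Adj u v)
    (x : ↥(branch hT u v)) (hv : v ∈ branch hT u v) (i j : Fin d) :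
    bottleneck hT d W u v (x, i) (⟨v, hv⟩, j) = (W s(u, v))⁻¹ i j := by
  rw [bott_apply]
  have h2 : (pathEdges hT v u).toFinset = {s(u, v)} := by
    rw [pathEdges, edges_vu hT hadj]
    simp
  have hmem : s(u, v) ∈ (pathEdges hT (x : V) u).toFinset :=
    List.mem_toFinset.2 (uv_mem_edges hT hadj x.2)
  rw [show ((pathEdges hT ((x : ↥(branch hT u v)) : V) u).toFinset ∩
      (pathEdges hT v u).toFinset) = {s(u, v)} by
    rw [h2]; exact Finset.inter_eq_right.2 (Finset.singleton_subset_iff.2 hmem)]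
  rw [Finset.sum_singleton]

lemma bottleneck_row {V : Type*} {G : SimpleGraph V} (hT : G.IsTree) (d : ℕ)
    (W : Sym2 V → Matrix (Fin d) (Fin d) ℝ) {u v : V} (hadj : G.Adj u v)
    (x : ↥(branch hT u v)) (hv : v ∈ branch hT u v) (i j : Fin d) :
    bottleneck hT d W u v (⟨v, hv⟩, i) (x, j) = (W s(u, v))⁻¹ i j := by
  rw [bott_apply]
  have h2 : (pathEdges hT v u).toFinset = {s(u, v)} := by
    rw [pathEdges, edges_vu hT hadj]
    simp
  have hmem : s(u, v) ∈ (pathEdges hT (x : V) u).toFinset :=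
    List.mem_toFinset.2 (uv_mem_edges hT hadj x.2)
  rw [show ((pathEdges hT v u).toFinset ∩
      (pathEdges hT ((x : ↥(branch hT u v)) : V) u).toFinset) = {s(u, v)} by
    rw [h2]; exact Finset.inter_eq_left.2 (Finset.singleton_subset_iff.2 hmem)]
  rw [Finset.sum_singleton]

end

section
variable {V : Type*} [Fintype V] [DecidableEq V] {G : SimpleGraph V} (hT : G.IsTree)
variable {u v : V}

/-- edge from `z` towards `u` -/
noncomputable def ed (u z : V) : Sym2 V := s(z, par hT u z)

/-- 0/1 path matrix of the branch -/
noncomputable def B0 (u v : V) : Matrix ↥(branch hT u v) ↥(branch hT u v) ℝ :=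
  Matrix.of fun y x => if (x : V) ∈ (pathWalk hT (y : V) u).support then 1 else 0

lemma bottleneck_expand (d : ℕ) (W : Sym2 V → Matrix (Fin d) (Fin d) ℝ)
    (hadj : G.Adj u v) (y z : ↥(branch hT u v)) (i j : Fin d) :
    bottleneck hT d W u v (y, i) (z, j) =
      ∑ x : ↥(branch hT u v), B0 hT u v y x * B0 hT u v z x * (W (ed hT u (x : V)))⁻¹ i j := by
  have hrhs : ∑ x : ↥(branch hT u v), B0 hT u v y x * B0 hT u v z x * (W (ed hT u (x : V)))⁻¹ i j
      = ∑ x ∈ Finset.univ.filter (fun x : ↥(branch hT u v) =>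
          (x : V) ∈ (pathWalk hT (y : V) u).support ∧ (x : V) ∈ (pathWalk hT (z : V) u).support),
          (W (ed hT u (x : V)))⁻¹ i j := by
    rw [Finset.sum_filter]
    refine Finset.sum_congr rfl fun x _ => ?_
    by_cases h1 : (x : V) ∈ (pathWalk hT (y : V) u).support <;>
      by_cases h2 : (x : V) ∈ (pathWalk hT (z : V) u).support <;>
      simp [B0, h1, h2]
  rw [hrhs]
  simp only [bott_apply hT d W u v (y, i) (z, j)]
  symm
  refine Finset.sum_bij (fun x _ => ed hT u (x : V)) ?_ ?_ ?_ ?_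
  · rintro x hx
    simp only [Finset.mem_filter, Finset.mem_univ, true_and] at hx
    simp only [Finset.mem_inter, List.mem_toFinset, pathEdges]
    constructor
    · exact (mem_edges_iff hT).2 ⟨x, hx.1, x.2.1, rfl⟩
    · exact (mem_edges_iff hT).2 ⟨x, hx.2, x.2.1, rfl⟩
  · rintro x hx x' hx' h
    exact Subtype.ext (firstEdge_inj hT x.2.1 x'.2.1 h)
  · rintro f hf
    simp only [Finset.mem_inter, List.mem_toFinset, pathEdges] at hf
    obtain ⟨x1, hx1s, hx1u, rfl⟩ := (mem_edges_iff hT).1 hf.1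
    obtain ⟨x2, hx2s, hx2u, hx2e⟩ := (mem_edges_iff hT).1 hf.2
    have hx12 : x1 = x2 := firstEdge_inj hT hx1u hx2u hx2e
    subst hx12
    have hx1b : x1 ∈ branch hT u v := branch_support hT hadj y.2 hx1s hx1u
    exact ⟨⟨x1, hx1b⟩, by simp [hx1s, hx2s], rfl⟩
  · intros; rfl

lemma B0_blockTriangular :
    (B0 hT u v).BlockTriangular (fun y => -((pathWalk hT (y : V) u).length : ℤ)) := by
  intro y x h
  simp only [B0, Matrix.of_apply]
  rw [if_neg]
  intro hx
  have := len_le_of_mem_support hT hx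
  simp only [neg_lt_neg_iff, Nat.cast_lt] at h
  omega

lemma B0_det : (B0 hT u v).det = 1 := by
  rw [(B0_blockTriangular hT).det]
  refine Finset.prod_eq_one fun a _ => ?_
  have h1 : (B0 hT u v).toSquareBlock (fun y => -((pathWalk hT (y : V) u).length : ℤ)) a = 1 := by
    ext i j
    rw [Matrix.toSquareBlock_def]
    by_cases hij : i = j
    · subst hij
      simp [B0, Matrix.one_apply_eq, SimpleGraph.Walk.start_mem_support]
    · rw [Matrix.one_apply_ne hij]
      simp only [B0, Matrix.of_apply]
      rw [if_neg]
      intro hmem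
      have hi2 := i.2
      have hj2 := j.2
      have hl : (pathWalk hT ((j.1 : ↥(branch hT u v)) : V) u).length =
          (pathWalk hT ((i.1 : ↥(branch hT u v)) : V) u).length := by omega
      exact hij (Subtype.ext (Subtype.ext (eq_of_mem_support_len_eq hT hmem hl))).symm
  rw [h1, Matrix.det_one]

open Kronecker

variable (d : ℕ) (W : Sym2 V → Matrix (Fin d) (Fin d) ℝ)

/-- block diagonal of inverse edge weights -/
noncomputable def Dm (u v : V) : Matrix (↥(branch hT u v) × Fin d) (↥(branch hT u v) × Fin d) ℝ :=
  Matrix.of fun p q => if p.1 = q.1 then (W (ed hT u (p.1 : V)))⁻¹ p.2 q.2 else 0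

/-- block diagonal of edge weights -/
noncomputable def DmInv (u v : V) : Matrix (↥(branch hT u v) × Fin d) (↥(branch hT u v) × Fin d) ℝ :=
  Matrix.of fun p q => if p.1 = q.1 then (W (ed hT u (p.1 : V))) p.2 q.2 else 0

lemma isUnit_W_ed (hW : ∀ e ∈ G.edgeSet, IsUnit (W e)) (x : ↥(branch hT u v)) :
    IsUnit (W (ed hT u (x : V))) :=
  hW _ ((SimpleGraph.mem_edgeSet G).2 (par_adj hT x.2.1))

lemma Dm_mul_DmInv (hW : ∀ e ∈ G.edgeSet, IsUnit (W e)) :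
    Dm hT d W u v * DmInv hT d W u v = 1 := by
  ext ⟨x, i⟩ ⟨z, j⟩
  simp only [Dm, DmInv, Matrix.mul_apply, Fintype.sum_prod_type, Matrix.of_apply,
    ite_mul, zero_mul, mul_ite, mul_zero, Finset.sum_ite_eq, Finset.mem_univ, if_true,
    Matrix.one_apply, Prod.mk.injEq]
  by_cases hxz : x = z
  · subst hxz
    rw [Finset.sum_eq_single_of_mem x (Finset.mem_univ x) (fun b _ hb => by simp [hb])]
    simp only [if_true, true_and]
    rw [← Matrix.mul_apply, Matrix.nonsing_inv_mul _
      ((Matrix.isUnit_iff_isUnit_det _).1 (isUnit_W_ed hT d W hW x)), Matrix.one_apply]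
  · simp [hxz]

lemma DmInv_mul_Dm (hW : ∀ e ∈ G.edgeSet, IsUnit (W e)) :
    DmInv hT d W u v * Dm hT d W u v = 1 := by
  ext ⟨x, i⟩ ⟨z, j⟩
  simp only [Dm, DmInv, Matrix.mul_apply, Fintype.sum_prod_type, Matrix.of_apply,
    ite_mul, zero_mul, mul_ite, mul_zero, Finset.sum_ite_eq, Finset.mem_univ, if_true,
    Matrix.one_apply, Prod.mk.injEq]
  by_cases hxz : x = z
  · subst hxz
    rw [Finset.sum_eq_single_of_mem x (Finset.mem_univ x) (fun b _ hb => by simp [hb])]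
    simp only [if_true, true_and]
    rw [← Matrix.mul_apply, Matrix.mul_nonsing_inv _
      ((Matrix.isUnit_iff_isUnit_det _).1 (isUnit_W_ed hT d W hW x)), Matrix.one_apply]
  · simp [hxz]

lemma bottleneck_factor (hadj : G.Adj u v) :
    bottleneck hT d W u v =
      (B0 hT u v ⊗ₖ (1 : Matrix (Fin d) (Fin d) ℝ)) * Dm hT d W u v *
        (B0 hT u v ⊗ₖ (1 : Matrix (Fin d) (Fin d) ℝ))ᵀ := by
  ext ⟨y, i⟩ ⟨z, j⟩
  rw [bottleneck_expand hT d W hadj y z i j, Matrix.mul_assoc]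
  have h1 : ∀ (x : ↥(branch hT u v)) (k : Fin d),
      (Dm hT d W u v * (B0 hT u v ⊗ₖ (1 : Matrix (Fin d) (Fin d) ℝ))ᵀ) (x, k) (z, j) =
        B0 hT u v z x * (W (ed hT u (x : V)))⁻¹ k j := by
    intro x k
    simp only [Dm, Matrix.mul_apply, Fintype.sum_prod_type, Matrix.of_apply,
      Matrix.transpose_apply, Matrix.kroneckerMap_apply, ite_mul, zero_mul,
      Finset.sum_ite_eq, Finset.mem_univ, if_true, Matrix.one_apply, mul_ite, mul_zero,
      mul_one]
    rw [mul_comm]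
  rw [Matrix.mul_apply]
  rw [Fintype.sum_prod_type]
  refine Finset.sum_congr rfl fun x _ => ?_
  have : ∀ k, (B0 hT u v ⊗ₖ (1 : Matrix (Fin d) (Fin d) ℝ)) (y, i) (x, k) =
      B0 hT u v y x * (1 : Matrix (Fin d) (Fin d) ℝ) i k := fun k => rfl
  rw [Finset.sum_congr rfl fun k _ => by rw [this k, h1 x k]]
  simp only [Matrix.one_apply, mul_ite, mul_one, mul_zero, ite_mul, zero_mul]
  rw [Finset.sum_ite_eq Finset.univ i
    fun k => B0 hT u v y x * (B0 hT u v z x * (W (ed hT u (x : V)))⁻¹ k j)]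
  simp [mul_assoc, mul_comm, mul_left_comm]

lemma isUnit_bott_det (hadj : G.Adj u v) (hW : ∀ e ∈ G.edgeSet, IsUnit (W e)) :
    IsUnit (bottleneck hT d W u v).det := by
  rw [bottleneck_factor hT d W hadj, Matrix.det_mul, Matrix.det_mul, Matrix.det_transpose,
    Matrix.det_kronecker, B0_det hT, Matrix.det_one]
  simp only [one_pow, mul_one, one_mul]
  exact IsUnit.of_mul_eq_one _
    (by rw [← Matrix.det_mul, Dm_mul_DmInv hT d W hW, Matrix.det_one])


variable (hv : v ∈ branch hT u v)

/-- right indicator matrix -/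
noncomputable def Rm : Matrix (↥(branch hT u v) × Fin d) (↥(branch hT u v) × Fin d) ℝ :=
  Matrix.of fun p q =>
    if q.1 = (⟨v, hv⟩ : ↥(branch hT u v)) ∧ p.2 = q.2 then (1 : ℝ) else 0

/-- left indicator matrix -/
noncomputable def Lm : Matrix (↥(branch hT u v) × Fin d) (↥(branch hT u v) × Fin d) ℝ :=
  Matrix.of fun p q =>
    if p.1 = (⟨v, hv⟩ : ↥(branch hT u v)) ∧ p.2 = q.2 then (1 : ℝ) else 0

/-- the rank-one perturbation -/
noncomputable def Pm (c : ℝ) : Matrix (↥(branch hT u v) × Fin d) (↥(branch hT u v) × Fin d) ℝ :=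
  Matrix.of fun p q =>
    if (p.1 : V) = v ∧ (q.1 : V) = v then c * W (Sym2.mk u v) p.2 q.2 else 0

/-- the all-ones-blocks matrix -/
noncomputable def Qm (a : ℝ) : Matrix (↥(branch hT u v) × Fin d) (↥(branch hT u v) × Fin d) ℝ :=
  Matrix.of fun p q => a * (W (Sym2.mk u v))⁻¹ p.2 q.2

lemma M_mul_P (hadj : G.Adj u v) (hW : ∀ e ∈ G.edgeSet, IsUnit (W e)) (c : ℝ) :
    bottleneck hT d W u v * Pm hT d W (u := u) (v := v) c = c • Rm hT d hv := by
  have hWi : (W (Sym2.mk u v))⁻¹ * W (Sym2.mk u v) = 1 :=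
    Matrix.nonsing_inv_mul _ ((Matrix.isUnit_iff_isUnit_det _).1
      (hW _ ((SimpleGraph.mem_edgeSet G).2 hadj)))
  ext ⟨p1, p2⟩ ⟨q1, q2⟩
  rw [Matrix.mul_apply, Fintype.sum_prod_type]
  by_cases hq : (q1 : V) = v
  · have hq' : q1 = (⟨v, hv⟩ : ↥(branch hT u v)) := Subtype.ext hq
    rw [Finset.sum_eq_single_of_mem (⟨v, hv⟩ : ↥(branch hT u v)) (Finset.mem_univ _)
      (fun b _ hb => Finset.sum_eq_zero fun k _ => by
        have hbv : ¬((b : V) = v) := fun h => hb (Subtype.ext h)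
        simp [Pm, hbv])]
    simp only [Pm, Matrix.of_apply, hq, and_true, if_pos rfl, if_true]
    rw [Finset.sum_congr rfl fun k _ => by
      rw [bottleneck_col hT d W hadj p1 hv p2 k]]
    rw [show (∑ k, (W (Sym2.mk u v))⁻¹ p2 k * (c * W (Sym2.mk u v) k q2))
        = c * ∑ k, (W (Sym2.mk u v))⁻¹ p2 k * W (Sym2.mk u v) k q2 by
      rw [Finset.mul_sum]; exact Finset.sum_congr rfl fun k _ => by ring]
    rw [← Matrix.mul_apply, hWi]
    simp [Rm, Matrix.one_apply, hq']
  · have hq1 : q1 ≠ (⟨v, hv⟩ : ↥(branch hT u v)) := fun h => hq (by rw [h])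
    rw [Finset.sum_eq_zero fun x _ => Finset.sum_eq_zero fun k _ => by simp [Pm, hq]]
    simp [Rm, hq1]

lemma P_mul_M (hadj : G.Adj u v) (hW : ∀ e ∈ G.edgeSet, IsUnit (W e)) (c : ℝ) :
    Pm hT d W (u := u) (v := v) c * bottleneck hT d W u v = c • Lm hT d hv := by
  have hWi : W (Sym2.mk u v) * (W (Sym2.mk u v))⁻¹ = 1 :=
    Matrix.mul_nonsing_inv _ ((Matrix.isUnit_iff_isUnit_det _).1
      (hW _ ((SimpleGraph.mem_edgeSet G).2 hadj)))
  ext ⟨p1, p2⟩ ⟨q1, q2⟩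
  rw [Matrix.mul_apply, Fintype.sum_prod_type]
  by_cases hp : (p1 : V) = v
  · have hp' : p1 = (⟨v, hv⟩ : ↥(branch hT u v)) := Subtype.ext hp
    rw [Finset.sum_eq_single_of_mem (⟨v, hv⟩ : ↥(branch hT u v)) (Finset.mem_univ _)
      (fun b _ hb => Finset.sum_eq_zero fun k _ => by
        have hbv : ¬((b : V) = v) := fun h => hb (Subtype.ext h)
        simp [Pm, hbv])]
    simp only [Pm, Matrix.of_apply, hp, true_and, if_pos rfl, if_true]
    rw [Finset.sum_congr rfl fun k _ => by
      rw [bottleneck_row hT d W hadj q1 hv k q2]]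
    rw [show (∑ k, (c * W (Sym2.mk u v) p2 k) * (W (Sym2.mk u v))⁻¹ k q2)
        = c * ∑ k, W (Sym2.mk u v) p2 k * (W (Sym2.mk u v))⁻¹ k q2 by
      rw [Finset.mul_sum]; exact Finset.sum_congr rfl fun k _ => by ring]
    rw [← Matrix.mul_apply, hWi]
    simp [Lm, Matrix.one_apply, hp']
  · have hp1 : p1 ≠ (⟨v, hv⟩ : ↥(branch hT u v)) := fun h => hp (by rw [h])
    rw [Finset.sum_eq_zero fun x _ => Finset.sum_eq_zero fun k _ => by simp [Pm, hp]]
    simp [Lm, hp1]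

lemma Q_mul_P (hadj : G.Adj u v) (hW : ∀ e ∈ G.edgeSet, IsUnit (W e)) (a c : ℝ) :
    Qm hT d W (u := u) (v := v) a * Pm hT d W (u := u) (v := v) c = (a * c) • Rm hT d hv := by
  have hWi : (W (Sym2.mk u v))⁻¹ * W (Sym2.mk u v) = 1 :=
    Matrix.nonsing_inv_mul _ ((Matrix.isUnit_iff_isUnit_det _).1
      (hW _ ((SimpleGraph.mem_edgeSet G).2 hadj)))
  ext ⟨p1, p2⟩ ⟨q1, q2⟩
  rw [Matrix.mul_apply, Fintype.sum_prod_type]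
  by_cases hq : (q1 : V) = v
  · have hq' : q1 = (⟨v, hv⟩ : ↥(branch hT u v)) := Subtype.ext hq
    rw [Finset.sum_eq_single_of_mem (⟨v, hv⟩ : ↥(branch hT u v)) (Finset.mem_univ _)
      (fun b _ hb => Finset.sum_eq_zero fun k _ => by
        have hbv : ¬((b : V) = v) := fun h => hb (Subtype.ext h)
        simp [Pm, hbv])]
    simp only [Pm, Qm, Matrix.of_apply, hq, and_true, if_pos rfl, if_true]
    rw [show (∑ k, (a * (W (Sym2.mk u v))⁻¹ p2 k) * (c * W (Sym2.mk u v) k q2))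
        = (a * c) * ∑ k, (W (Sym2.mk u v))⁻¹ p2 k * W (Sym2.mk u v) k q2 by
      rw [Finset.mul_sum]; exact Finset.sum_congr rfl fun k _ => by ring]
    rw [← Matrix.mul_apply, hWi]
    simp [Rm, Matrix.one_apply, hq']
  · have hq1 : q1 ≠ (⟨v, hv⟩ : ↥(branch hT u v)) := fun h => hq (by rw [h])
    rw [Finset.sum_eq_zero fun x _ => Finset.sum_eq_zero fun k _ => by simp [Pm, hq]]
    simp [Rm, hq1]

lemma P_mul_Q (hadj : G.Adj u v) (hW : ∀ e ∈ G.edgeSet, IsUnit (W e)) (a c : ℝ) :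
    Pm hT d W (u := u) (v := v) c * Qm hT d W (u := u) (v := v) a = (a * c) • Lm hT d hv := by
  have hWi : W (Sym2.mk u v) * (W (Sym2.mk u v))⁻¹ = 1 :=
    Matrix.mul_nonsing_inv _ ((Matrix.isUnit_iff_isUnit_det _).1
      (hW _ ((SimpleGraph.mem_edgeSet G).2 hadj)))
  ext ⟨p1, p2⟩ ⟨q1, q2⟩
  rw [Matrix.mul_apply, Fintype.sum_prod_type]
  by_cases hp : (p1 : V) = v
  · have hp' : p1 = (⟨v, hv⟩ : ↥(branch hT u v)) := Subtype.ext hp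
    rw [Finset.sum_eq_single_of_mem (⟨v, hv⟩ : ↥(branch hT u v)) (Finset.mem_univ _)
      (fun b _ hb => Finset.sum_eq_zero fun k _ => by
        have hbv : ¬((b : V) = v) := fun h => hb (Subtype.ext h)
        simp [Pm, hbv])]
    simp only [Pm, Qm, Matrix.of_apply, hp, true_and, if_pos rfl, if_true]
    rw [show (∑ k, (c * W (Sym2.mk u v) p2 k) * (a * (W (Sym2.mk u v))⁻¹ k q2))
        = (a * c) * ∑ k, W (Sym2.mk u v) p2 k * (W (Sym2.mk u v))⁻¹ k q2 by
      rw [Finset.mul_sum]; exact Finset.sum_congr rfl fun k _ => by ring]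
    rw [← Matrix.mul_apply, hWi]
    simp [Lm, Matrix.one_apply, hp']
  · have hp1 : p1 ≠ (⟨v, hv⟩ : ↥(branch hT u v)) := fun h => hp (by rw [h])
    rw [Finset.sum_eq_zero fun x _ => Finset.sum_eq_zero fun k _ => by simp [Pm, hp]]
    simp [Lm, hp1]

lemma Q_mul_Minv (hadj : G.Adj u v) (hW : ∀ e ∈ G.edgeSet, IsUnit (W e)) (a : ℝ) :
    Qm hT d W (u := u) (v := v) a * (bottleneck hT d W u v)⁻¹ = a • Rm hT d hv := by
  have hMMinv : bottleneck hT d W u v * (bottleneck hT d W u v)⁻¹ = 1 :=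
    Matrix.mul_nonsing_inv _ (isUnit_bott_det hT d W hadj hW)
  ext ⟨p1, p2⟩ ⟨q1, q2⟩
  rw [Matrix.mul_apply]
  rw [Finset.sum_congr rfl fun r _ => show
      Qm hT d W (u := u) (v := v) a (p1, p2) r * (bottleneck hT d W u v)⁻¹ r (q1, q2)
      = a * (bottleneck hT d W u v (⟨v, hv⟩, p2) r *
          (bottleneck hT d W u v)⁻¹ r (q1, q2)) by
    rw [show bottleneck hT d W u v (⟨v, hv⟩, p2) r = (W (Sym2.mk u v))⁻¹ p2 r.2 from
      bottleneck_row hT d W hadj r.1 hv p2 r.2]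
    rw [Qm, Matrix.of_apply, mul_assoc]]
  rw [← Finset.mul_sum, ← Matrix.mul_apply, hMMinv, Matrix.one_apply]
  by_cases hq : q1 = (⟨v, hv⟩ : ↥(branch hT u v))
  · subst hq
    simp [Rm, Prod.ext_iff, eq_comm]
  · have hne : ((⟨v, hv⟩ : ↥(branch hT u v)), p2) ≠ (q1, q2) :=
      fun h => hq (congrArg Prod.fst h).symm
    simp [Rm, hq, hne]

lemma Minv_mul_Q (hadj : G.Adj u v) (hW : ∀ e ∈ G.edgeSet, IsUnit (W e)) (a : ℝ) :
    (bottleneck hT d W u v)⁻¹ * Qm hT d W (u := u) (v := v) a = a • Lm hT d hv := by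
  have hMinvM : (bottleneck hT d W u v)⁻¹ * bottleneck hT d W u v = 1 :=
    Matrix.nonsing_inv_mul _ (isUnit_bott_det hT d W hadj hW)
  ext ⟨p1, p2⟩ ⟨q1, q2⟩
  rw [Matrix.mul_apply]
  rw [Finset.sum_congr rfl fun r _ => show
      (bottleneck hT d W u v)⁻¹ (p1, p2) r * Qm hT d W (u := u) (v := v) a r (q1, q2)
      = a * ((bottleneck hT d W u v)⁻¹ (p1, p2) r *
          bottleneck hT d W u v r (⟨v, hv⟩, q2)) by
    rw [show bottleneck hT d W u v r (⟨v, hv⟩, q2) = (W (Sym2.mk u v))⁻¹ r.2 q2 from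
      bottleneck_col hT d W hadj r.1 hv r.2 q2]
    rw [Qm, Matrix.of_apply]; ring]
  rw [← Finset.mul_sum, ← Matrix.mul_apply, hMinvM, Matrix.one_apply]
  by_cases hp : p1 = (⟨v, hv⟩ : ↥(branch hT u v))
  · subst hp
    simp [Lm, Prod.ext_iff]
  · simp [Lm, hp, Prod.ext_iff]

end

/-- For a tree with nonsingular matrix edge weights, an edge `e` between `u` and `v`, and
`0 < α < 1`, the matrix `M_u(v) - α (J ⊗ W(e)⁻¹)` is invertible with inverse
`M_u(v)⁻¹ + e_v e_vᵀ ⊗ ((α/(1-α)) W(e))`. -/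
theorem bottleneck_shift_inverse {V : Type*} [Fintype V] [DecidableEq V]
    (G : SimpleGraph V) (hT : G.IsTree) (d : ℕ)
    (W : Sym2 V → Matrix (Fin d) (Fin d) ℝ)
    (hW : ∀ e ∈ G.edgeSet, IsUnit (W e))
    (u v : V) (hadj : G.Adj u v) (α : ℝ) (hα0 : 0 < α) (hα1 : α < 1) :
    letI A : Matrix (↥(branch hT u v) × Fin d) (↥(branch hT u v) × Fin d) ℝ :=
      bottleneck hT d W u v -
        Matrix.of (fun p q : ↥(branch hT u v) × Fin d =>
          α * (W (Sym2.mk u v))⁻¹ p.2 q.2)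
    letI N : Matrix (↥(branch hT u v) × Fin d) (↥(branch hT u v) × Fin d) ℝ :=
      (bottleneck hT d W u v)⁻¹ +
        Matrix.of (fun p q : ↥(branch hT u v) × Fin d =>
          if (p.1 : V) = v ∧ (q.1 : V) = v then
            (α / (1 - α)) * W (Sym2.mk u v) p.2 q.2
          else 0)
    A * N = 1 ∧ N * A = 1 := by
  have hv : v ∈ branch hT u v := v_mem_branch hT hadj
  have hMdet : IsUnit (bottleneck hT d W u v).det := isUnit_bott_det hT d W hadj hW
  have hMMinv := Matrix.mul_nonsing_inv _ hMdet
  have hMinvM := Matrix.nonsing_inv_mul _ hMdet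
  have h1α : (1 : ℝ) - α ≠ 0 := by linarith
  have hc1 : (α / (1 - α)) * (1 - α) = α := div_mul_cancel₀ _ h1α
  have hA : (bottleneck hT d W u v - Qm hT d W (u := u) (v := v) α) *
      ((bottleneck hT d W u v)⁻¹ + Pm hT d W (u := u) (v := v) (α / (1 - α))) = 1 := by
    rw [sub_mul, mul_add, mul_add, hMMinv, M_mul_P hT d W hv hadj hW (α / (1 - α)),
      Q_mul_Minv hT d W hv hadj hW α, Q_mul_P hT d W hv hadj hW α (α / (1 - α))]
    have hz : (α / (1 - α)) • Rm hT d hv -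
        (α • Rm hT d hv + (α * (α / (1 - α))) • Rm hT d hv) = 0 := by
      rw [← add_smul, ← sub_smul,
        show (α / (1 - α)) - (α + α * (α / (1 - α))) = 0 by nlinarith [hc1], zero_smul]
    rw [add_sub_assoc, hz, add_zero]
  have hB : ((bottleneck hT d W u v)⁻¹ + Pm hT d W (u := u) (v := v) (α / (1 - α))) *
      (bottleneck hT d W u v - Qm hT d W (u := u) (v := v) α) = 1 := by
    rw [add_mul, mul_sub, mul_sub, hMinvM, P_mul_M hT d W hv hadj hW (α / (1 - α)),
      Minv_mul_Q hT d W hv hadj hW α, P_mul_Q hT d W hv hadj hW α (α / (1 - α))]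
    have hz : (α / (1 - α)) • Lm hT d hv - (α * (α / (1 - α))) • Lm hT d hv
        = α • Lm hT d hv := by
      rw [← sub_smul, show (α / (1 - α)) - α * (α / (1 - α)) = α by nlinarith [hc1]]
    rw [hz, sub_add_cancel]
  exact ⟨hA, hB⟩
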